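/- arXiv:1208.4578 — 2 statements merged into one kernel-verified Lean document; each statement's English description precedes it below -/
import Mathlib

section
/- Let g : ℝ → ℝ be a continuous function of rapid decay (i.e., for every k, x^k g(x) is bounded) such that all moments vanish: ∫ g(x) x^k dx = 0 for all k ∈ ℕ. If the support of g is not compact, then the set of zeros {x : g(x) = 0} is unbounded. -/
open MeasureTheory Filter Topology

noncomputable def ft (f : ℝ → ℂ) (ω : ℝ) : ℂ :=
  ∫ x : ℝ, Complex.exp (-(Complex.I * ω * x)) * f x

def IsSignatureWavelet (κ : SchwartzMap ℝ ℂ) : Prop :=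
  κ ≠ 0 ∧
  (∃ c d : ℝ, 0 < c ∧ c < d ∧ ∀ ω : ℝ, ft (⇑κ) ω ≠ 0 → ω ∈ Set.Icc c d) ∧
  (∀ ω : ℝ, (ft (⇑κ) ω).im = 0 ∧ 0 ≤ (ft (⇑κ) ω).re)

noncomputable def csgn (z : ℂ) : ℂ := if z = 0 then 0 else z / (‖z‖ : ℂ)

noncomputable def wcoeff (f : ℝ → ℂ) (κ : SchwartzMap ℝ ℂ) (a b : ℝ) : ℂ :=
  (Real.sqrt a : ℂ)⁻¹ * ∫ x : ℝ, f x * κ ((x - b) / a)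

open Classical in
noncomputable def signature (f : ℝ → ℂ) (b : ℝ) : ℂ :=
  if h : ∃ z : ℂ, ∀ κ : SchwartzMap ℝ ℂ, IsSignatureWavelet κ →
      Filter.Tendsto (fun a => csgn (wcoeff f κ a b)) (𝓝[>] (0:ℝ)) (𝓝 z)
  then h.choose else 0


private lemma core_moment_contradiction (g : ℝ → ℝ) (hcont : Continuous g)
    (M : ℝ) (hM : ∀ x, |g x| ≤ M)
    (hint : ∀ p : Polynomial ℝ, Integrable (fun x => g x * p.eval x))
    (hmomp : ∀ p : Polynomial ℝ, ∫ x : ℝ, g x * p.eval x = 0)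
    (S α β : ℝ) (hS : 2 ≤ S)
    (hLb : ∀ x ∈ Set.Icc (-S) S, |α + β * x| ≤ 1 + S)
    (hpos : ∀ x : ℝ, S ≤ |x| → 0 < g x * (α + β * x)) : False := by
  have hS0 : (0:ℝ) < S := by linarith
  -- minimum of g * L on [2S, 2S+1]
  have hLcont : Continuous (fun x : ℝ => g x * (α + β * x)) := by continuity
  obtain ⟨x₀, hx₀mem, hx₀min⟩ := (isCompact_Icc (a := 2*S) (b := 2*S+1)).exists_isMinOn
    (Set.nonempty_Icc.mpr (by linarith)) hLcont.continuousOn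
  set ε := g x₀ * (α + β * x₀) with hεdef
  have hε : 0 < ε := by
    apply hpos
    have : 2*S ≤ x₀ := hx₀mem.1
    calc S ≤ x₀ := by linarith
    _ ≤ |x₀| := le_abs_self _
  -- the polynomial family
  set P : ℕ → Polynomial ℝ := fun m =>
    (Polynomial.C α + Polynomial.C β * Polynomial.X) *
      ((Polynomial.X ^ 2 - Polynomial.C (S^2)) ^ (2*m)) with hP
  have hfeval : ∀ m (x : ℝ), (P m).eval x = (α + β * x) * (x^2 - S^2)^(2*m) := by
    intro m x; simp [hP]
  have key : ∀ m : ℕ, ε * (3*S^2)^(2*m) ≤ (1+S) * M * (S^2)^(2*m) * (2*S) := by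
    intro m
    set f : ℝ → ℝ := fun x => g x * (P m).eval x with hf
    have hInt : Integrable f := hint (P m)
    have hZero : ∫ x : ℝ, f x = 0 := hmomp (P m)
    have hA : MeasurableSet (Set.Icc (-S) S) := measurableSet_Icc
    have hsplit : (∫ x in Set.Icc (-S) S, f x) + ∫ x in (Set.Icc (-S) S)ᶜ, f x = 0 := by
      rw [integral_add_compl hA hInt, hZero]
    -- nonnegativity outside
    have houtabs : ∀ x : ℝ, x ∈ (Set.Icc (-S) S)ᶜ → S < |x| := by
      intro x hx
      simp only [Set.mem_compl_iff, Set.mem_Icc, not_and_or, not_le] at hx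
      rcases hx with h | h
      · rw [abs_of_neg (by linarith)]; linarith
      · calc S < x := h
        _ ≤ |x| := le_abs_self _
    have hnonneg : ∀ x ∈ (Set.Icc (-S) S)ᶜ, 0 ≤ f x := by
      intro x hx
      have h1 : 0 < g x * (α + β * x) := hpos x (houtabs x hx).le
      have h2 : 0 ≤ (x^2 - S^2)^(2*m) := by
        rw [pow_mul]; exact pow_nonneg (sq_nonneg _) m
      have : f x = (g x * (α + β * x)) * (x^2 - S^2)^(2*m) := by
        rw [hf]; simp only [hfeval]; ring
      rw [this]; exact mul_nonneg h1.le h2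
    have hsub : Set.Icc (2*S) (2*S+1) ⊆ (Set.Icc (-S) S)ᶜ := by
      intro x hx
      simp only [Set.mem_compl_iff, Set.mem_Icc, not_and_or, not_le]
      right
      have h1 : 2*S ≤ x := hx.1
      linarith
    have h1 : (∫ x in Set.Icc (2*S) (2*S+1), f x) ≤ ∫ x in (Set.Icc (-S) S)ᶜ, f x :=
      setIntegral_mono_set hInt.integrableOn
        ((ae_restrict_iff' hA.compl).mpr (ae_of_all _ hnonneg))
        (HasSubset.Subset.eventuallyLE hsub)
    -- lower bound on [2S, 2S+1]
    have hlow : ∀ x ∈ Set.Icc (2*S) (2*S+1), ε * (3*S^2)^(2*m) ≤ f x := by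
      intro x hx
      have hεx : ε ≤ g x * (α + β * x) := isMinOn_iff.mp hx₀min x hx
      have hx1 : 2*S ≤ x := hx.1
      have hpow : (3*S^2)^(2*m) ≤ (x^2 - S^2)^(2*m) := by
        apply pow_le_pow_left₀ (by positivity)
        nlinarith
      have : f x = (g x * (α + β * x)) * (x^2 - S^2)^(2*m) := by
        rw [hf]; simp only [hfeval]; ring
      rw [this]
      exact mul_le_mul hεx hpow (by positivity) (le_trans hε.le hεx)
    have h2 : ε * (3*S^2)^(2*m) ≤ ∫ x in Set.Icc (2*S) (2*S+1), f x := by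
      have hvol : volume (Set.Icc (2*S) (2*S+1)) < ⊤ := measure_Icc_lt_top
      have := setIntegral_mono_on
        (integrableOn_const hvol.ne) hInt.integrableOn measurableSet_Icc hlow
      rw [setIntegral_const] at this
      rw [Real.volume_real_Icc, show 2*S+1 - 2*S = 1 by ring] at this
      simpa using this
    -- upper bound inside
    have hbnd : ∀ x ∈ Set.Icc (-S) S, ‖f x‖ ≤ (1+S) * M * (S^2)^(2*m) := by
      intro x hx
      have hgx := hM x
      have hL := hLb x hx
      have hx2 : x^2 ≤ S^2 := sq_le_sq' (by linarith [hx.1]) hx.2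
      have hmid : |x^2 - S^2| ≤ S^2 := by
        rw [abs_of_nonpos (by linarith)]; nlinarith
      have hpow : |x^2 - S^2|^(2*m) ≤ (S^2)^(2*m) := pow_le_pow_left₀ (abs_nonneg _) hmid _
      have : ‖f x‖ = |g x| * (|α + β * x| * |x^2 - S^2|^(2*m)) := by
        rw [hf, Real.norm_eq_abs]; simp only [hfeval]
        rw [abs_mul, abs_mul, abs_pow]
      rw [this]
      have hM0 : 0 ≤ M := le_trans (abs_nonneg _) hgx
      calc |g x| * (|α + β * x| * |x^2 - S^2|^(2*m))
          ≤ M * ((1+S) * (S^2)^(2*m)) := by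
            apply mul_le_mul hgx _ (by positivity) hM0
            exact mul_le_mul hL hpow (by positivity) (by linarith)
        _ = (1+S) * M * (S^2)^(2*m) := by ring
    have h3 : ‖∫ x in Set.Icc (-S) S, f x‖ ≤ (1+S) * M * (S^2)^(2*m) * (2*S) := by
      have := norm_setIntegral_le_of_norm_le_const (μ := volume)
        (s := Set.Icc (-S) S) (f := f) measure_Icc_lt_top hbnd
      rw [Real.volume_real_Icc, show S - (-S) = 2*S by ring, max_eq_left (by linarith)] at this
      exact this
    have h4 : (∫ x in (Set.Icc (-S) S)ᶜ, f x) = - ∫ x in Set.Icc (-S) S, f x := by linarith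
    have h5 : - (∫ x in Set.Icc (-S) S, f x) ≤ ‖∫ x in Set.Icc (-S) S, f x‖ :=
      neg_le_abs _
    linarith
  -- derive contradiction
  have hM0 : 0 ≤ M := le_trans (abs_nonneg _) (hM 0)
  set K := (1+S) * M * (2*S) with hK
  have hmain : ∀ m : ℕ, ε * 3^(2*m) ≤ K := by
    intro m
    have h := key m
    have hp : (0:ℝ) < (S^2)^(2*m) := by positivity
    have h' : (ε * 3^(2*m)) * (S^2)^(2*m) ≤ K * (S^2)^(2*m) := by
      calc (ε * 3^(2*m)) * (S^2)^(2*m) = ε * (3*S^2)^(2*m) := by rw [mul_pow]; ring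
        _ ≤ (1+S) * M * (S^2)^(2*m) * (2*S) := h
        _ = K * (S^2)^(2*m) := by rw [hK]; ring
    exact le_of_mul_le_mul_right h' hp
  obtain ⟨n, hn⟩ := pow_unbounded_of_one_lt (K / ε) (by norm_num : (1:ℝ) < 3)
  have h1 : (3:ℝ)^(2*n) ≤ K / ε := (le_div_iff₀' hε).mpr (hmain n)
  have h2 : (3:ℝ)^n ≤ 3^(2*n) := pow_le_pow_right₀ (by norm_num) (by omega)
  linarith

theorem moments_vanish_noncompact_support_zeros_unbounded
    (g : ℝ → ℝ) (hcont : Continuous g)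
    (hdecay : ∀ k : ℕ, ∃ C : ℝ, ∀ x : ℝ, |x| ^ k * |g x| ≤ C)
    (hmom : ∀ k : ℕ, ∫ x : ℝ, g x * x ^ k = 0)
    (hsupp : ¬ IsCompact (tsupport g)) :
    ¬ Bornology.IsBounded {x : ℝ | g x = 0} := by
  intro hB
  -- integrability of monomial moments
  have hIntMono : ∀ k : ℕ, Integrable (fun x : ℝ => g x * x ^ k) := by
    intro k
    obtain ⟨C₁, hC₁⟩ := hdecay k
    obtain ⟨C₂, hC₂⟩ := hdecay (k + 2)
    have hbound : ∀ x : ℝ, ‖g x * x ^ k‖ ≤ ‖(C₁ + C₂) * (1 + x^2)⁻¹‖ := by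
      intro x
      have h1 : (1 + x^2) * (|g x| * |x|^k) ≤ C₁ + C₂ := by
        have e1 := hC₁ x
        have e2 := hC₂ x
        have : |x|^(k+2) = |x|^k * x^2 := by
          rw [pow_add]; rw [sq_abs]
        rw [this] at e2
        nlinarith [abs_nonneg (g x), pow_nonneg (abs_nonneg x) k, sq_nonneg x]
      have hpos : (0:ℝ) < 1 + x^2 := by positivity
      have h2 : |g x| * |x|^k ≤ (C₁ + C₂) * (1 + x^2)⁻¹ := by
        rw [le_mul_inv_iff₀ hpos, mul_comm]
        exact h1
      calc ‖g x * x ^ k‖ = |g x| * |x|^k := by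
            rw [Real.norm_eq_abs, abs_mul, abs_pow]
        _ ≤ (C₁ + C₂) * (1 + x^2)⁻¹ := h2
        _ ≤ ‖(C₁ + C₂) * (1 + x^2)⁻¹‖ := le_abs_self _
    exact Integrable.mono (integrable_inv_one_add_sq.const_mul (C₁ + C₂))
      ((hcont.mul (continuous_pow k)).aestronglyMeasurable) (ae_of_all _ hbound)
  have hIntPoly : ∀ p : Polynomial ℝ, Integrable (fun x : ℝ => g x * p.eval x) := by
    intro p
    induction p using Polynomial.induction_on' with
    | add p q hp hq =>
      have : (fun x : ℝ => g x * (p + q).eval x)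
          = (fun x => g x * p.eval x) + (fun x => g x * q.eval x) := by
        funext x; simp [mul_add]
      rw [this]; exact hp.add hq
    | monomial n a =>
      have : (fun x : ℝ => g x * (Polynomial.monomial n a).eval x)
          = fun x => a * (g x * x ^ n) := by
        funext x; simp [Polynomial.eval_monomial]; ring
      rw [this]; exact (hIntMono n).const_mul a
  have hMomPoly : ∀ p : Polynomial ℝ, ∫ x : ℝ, g x * p.eval x = 0 := by
    intro p
    induction p using Polynomial.induction_on' with
    | add p q hp hq =>
      have : (fun x : ℝ => g x * (p + q).eval x)
          = (fun x => g x * p.eval x + g x * q.eval x) := by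
        funext x; simp [mul_add]
      rw [this, integral_add (hIntPoly p) (hIntPoly q), hp, hq, add_zero]
    | monomial n a =>
      have : (fun x : ℝ => g x * (Polynomial.monomial n a).eval x)
          = fun x => a * (g x * x ^ n) := by
        funext x; simp [Polynomial.eval_monomial]; ring
      rw [this, integral_const_mul, hmom n, mul_zero]
  -- bound on |g|
  obtain ⟨M, hM⟩ := hdecay 0
  have hM' : ∀ x, |g x| ≤ M := by intro x; have := hM x; simpa using this
  -- zeros bound
  obtain ⟨R, hR⟩ := isBounded_iff_forall_norm_le.mp hB
  have hzero : ∀ x : ℝ, g x = 0 → |x| ≤ R := by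
    intro x hx
    have := hR x hx
    simpa [Real.norm_eq_abs] using this
  set S := |R| + 2 with hSdef
  have hS2 : (2:ℝ) ≤ S := by rw [hSdef]; linarith [abs_nonneg R]
  have hRS : R < S := lt_of_le_of_lt (le_abs_self R) (by rw [hSdef]; linarith)
  have hne : ∀ x : ℝ, S ≤ |x| → g x ≠ 0 := by
    intro x hx h
    have := hzero x h
    linarith
  -- sign on the right
  have hSpos : 0 < S := by linarith
  have hright : (∀ x, S ≤ x → 0 < g x) ∨ (∀ x, S ≤ x → g x < 0) := by
    have hgs : g S ≠ 0 := hne S (by rw [abs_of_pos hSpos])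
    rcases hgs.lt_or_gt with h | h
    · right
      intro x hx
      by_contra hgx
      push_neg at hgx
      have hgx' : 0 < g x := lt_of_le_of_ne hgx
        (fun he => hne x (le_trans hx (le_abs_self x)) he.symm)
      obtain ⟨c, hc, hgc⟩ := intermediate_value_Icc hx hcont.continuousOn
        (Set.mem_Icc.mpr ⟨h.le, hgx'.le⟩)
      have := hzero c hgc
      have : c ≤ R := le_trans (le_abs_self c) this
      linarith [hc.1]
    · left
      intro x hx
      by_contra hgx
      push_neg at hgx
      have hgx' : g x < 0 := lt_of_le_of_ne hgx
        (fun he => hne x (le_trans hx (le_abs_self x)) he)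
      obtain ⟨c, hc, hgc⟩ := intermediate_value_Icc' hx hcont.continuousOn
        (Set.mem_Icc.mpr ⟨hgx'.le, h.le⟩)
      have := hzero c hgc
      have : c ≤ R := le_trans (le_abs_self c) this
      linarith [hc.1]
  -- sign on the left
  have hleft : (∀ x, x ≤ -S → 0 < g x) ∨ (∀ x, x ≤ -S → g x < 0) := by
    have hgs : g (-S) ≠ 0 := hne (-S) (by rw [abs_neg, abs_of_pos hSpos])
    have habs : ∀ x : ℝ, x ≤ -S → S ≤ |x| := by
      intro x hx; rw [abs_of_neg (by linarith)]; linarith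
    rcases hgs.lt_or_gt with h | h
    · right
      intro x hx
      by_contra hgx
      push_neg at hgx
      have hgx' : 0 < g x := lt_of_le_of_ne hgx
        (fun he => hne x (habs x hx) he.symm)
      obtain ⟨c, hc, hgc⟩ := intermediate_value_Icc' hx hcont.continuousOn
        (Set.mem_Icc.mpr ⟨h.le, hgx'.le⟩)
      have := hzero c hgc
      have : -R ≤ c := neg_le_of_abs_le this
      linarith [hc.2]
    · left
      intro x hx
      by_contra hgx
      push_neg at hgx
      have hgx' : g x < 0 := lt_of_le_of_ne hgx
        (fun he => hne x (habs x hx) he)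
      obtain ⟨c, hc, hgc⟩ := intermediate_value_Icc hx hcont.continuousOn
        (Set.mem_Icc.mpr ⟨hgx'.le, h.le⟩)
      have := hzero c hgc
      have : -R ≤ c := neg_le_of_abs_le this
      linarith [hc.2]
  -- split |x| ≥ S into cases
  have habs_cases : ∀ x : ℝ, S ≤ |x| → S ≤ x ∨ x ≤ -S := by
    intro x hx
    rcases le_abs.mp hx with h | h
    · left; exact h
    · right; linarith
  rcases hright with hp | hn₁ <;> rcases hleft with hq | hq
  · -- (+,+) : α = 1, β = 0
    exact core_moment_contradiction g hcont M hM' hIntPoly hMomPoly S 1 0 hS2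
      (fun x _ => by norm_num; linarith)
      (fun x hx => by
        rcases habs_cases x hx with h | h
        · simpa using hp x h
        · simpa using hq x h)
  · -- (+,-) : α = 0, β = 1
    exact core_moment_contradiction g hcont M hM' hIntPoly hMomPoly S 0 1 hS2
      (fun x hx => by
        simp only [zero_add, one_mul]
        rcases Set.mem_Icc.mp hx with ⟨h1, h2⟩
        rw [abs_le]; constructor <;> linarith)
      (fun x hx => by
        simp only [zero_add, one_mul]
        rcases habs_cases x hx with h | h
        · exact mul_pos (hp x h) (by linarith)
        · exact mul_pos_of_neg_of_neg (hq x h) (by linarith))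
  · -- (-,+) : α = 0, β = -1
    exact core_moment_contradiction g hcont M hM' hIntPoly hMomPoly S 0 (-1) hS2
      (fun x hx => by
        simp only [zero_add, neg_one_mul, abs_neg]
        rcases Set.mem_Icc.mp hx with ⟨h1, h2⟩
        rw [abs_le]; constructor <;> linarith)
      (fun x hx => by
        simp only [zero_add, neg_one_mul]
        rcases habs_cases x hx with h | h
        · exact mul_pos_of_neg_of_neg (hn₁ x h) (by linarith)
        · exact mul_pos (hq x h) (by linarith))
  · -- (-,-) : α = -1, β = 0
    exact core_moment_contradiction g hcont M hM' hIntPoly hMomPoly S (-1) 0 hS2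
      (fun x _ => by norm_num; linarith)
      (fun x hx => by
        rcases habs_cases x hx with h | h
        · simpa using mul_pos_of_neg_of_neg (hn₁ x h) (by norm_num : (-1:ℝ) < 0)
        · simpa using mul_pos_of_neg_of_neg (hq x h) (by norm_num : (-1:ℝ) < 0))
end

section
/- For 0 < γ < 2 with γ ∉ 2ℕ₀, and any signature wavelet κ, the pairing ⟨|·|^γ, κ_{a,0}⟩ is real and strictly negative for every a > 0; hence sgn⟨|·|^γ, κ_{a,0}⟩ = -1. -/
open MeasureTheory Filter Topology

namespace SigProof

open Set FourierTransform

lemma one_sub_cos_nonneg (x : ℝ) : 0 ≤ 1 - Real.cos x := by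
  nlinarith [Real.cos_le_one x]

lemma one_sub_cos_le_two (x : ℝ) : 1 - Real.cos x ≤ 2 := by
  nlinarith [Real.neg_one_le_cos x]

lemma one_sub_cos_le_sq (x : ℝ) : 1 - Real.cos x ≤ x^2/2 := by
  have h := Real.cos_two_mul' (x/2)
  rw [mul_div_cancel₀ x two_ne_zero] at h
  have h2 : Real.sin (x/2)^2 ≤ (x/2)^2 := by
    rw [← sq_abs (Real.sin _), ← sq_abs (x/2)]
    exact pow_le_pow_left₀ (abs_nonneg _) (Real.abs_sin_le_abs) 2
  have h4 := Real.sin_sq_add_cos_sq (x/2)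
  nlinarith [h]

noncomputable def ker (γ x t : ℝ) : ℝ := (1 - Real.cos (t * x)) * t ^ (-1 - γ)

lemma ker_nonneg (γ x : ℝ) {t : ℝ} (ht : 0 < t) : 0 ≤ ker γ x t :=
  mul_nonneg (one_sub_cos_nonneg _) (Real.rpow_nonneg ht.le _)

lemma ker_meas (γ x : ℝ) : Measurable (ker γ x) := by unfold ker; fun_prop

lemma ker_integrableOn {γ : ℝ} (hγ0 : 0 < γ) (hγ2 : γ < 2) (x : ℝ) :
    IntegrableOn (ker γ x) (Ioi 0) := by
  have h1 : IntegrableOn (ker γ x) (Ioc 0 1) := by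
    have hbound : IntegrableOn (fun t : ℝ => x^2/2 * t ^ (1 - γ)) (Ioc 0 1) := by
      apply Integrable.const_mul
      have h := intervalIntegral.intervalIntegrable_rpow' (a := 0) (b := 1)
        (show (-1:ℝ) < 1 - γ by linarith)
      rwa [intervalIntegrable_iff_integrableOn_Ioc_of_le zero_le_one] at h
    refine Integrable.mono hbound ((ker_meas γ x).aestronglyMeasurable) ?_
    filter_upwards [ae_restrict_mem measurableSet_Ioc] with t ht
    have ht0 : (0:ℝ) < t := ht.1
    rw [Real.norm_eq_abs, Real.norm_eq_abs, abs_of_nonneg (ker_nonneg γ x ht0),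
      abs_of_nonneg (by positivity)]
    calc ker γ x t ≤ ((t*x)^2/2) * t ^ (-1-γ) :=
          mul_le_mul_of_nonneg_right (one_sub_cos_le_sq _) (Real.rpow_nonneg ht0.le _)
      _ = x^2/2 * t ^ (1-γ) := by
          rw [show (1:ℝ)-γ = 2 + (-1-γ) by ring, Real.rpow_add ht0, Real.rpow_two]
          ring
  have h2 : IntegrableOn (ker γ x) (Ioi 1) := by
    have hbound : IntegrableOn (fun t : ℝ => 2 * t ^ (-1 - γ)) (Ioi 1) :=
      (integrableOn_Ioi_rpow_of_lt (by linarith) one_pos).const_mul 2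
    refine Integrable.mono hbound ((ker_meas γ x).aestronglyMeasurable) ?_
    filter_upwards [ae_restrict_mem measurableSet_Ioi] with t ht
    have ht0 : (0:ℝ) < t := lt_trans one_pos ht
    rw [Real.norm_eq_abs, Real.norm_eq_abs, abs_of_nonneg (ker_nonneg γ x ht0),
      abs_of_nonneg (by positivity)]
    exact mul_le_mul_of_nonneg_right (one_sub_cos_le_two _) (Real.rpow_nonneg ht0.le _)
  have := h1.union h2
  rwa [Ioc_union_Ioi_eq_Ioi zero_le_one] at this

noncomputable def Kc (γ : ℝ) : ℝ := ∫ u in Ioi (0:ℝ), (1 - Real.cos u) * u ^ (-1 - γ)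

lemma kernel_integral {γ : ℝ} (hγ0 : 0 < γ) (hγ2 : γ < 2) (x : ℝ) :
    ∫ t in Ioi (0:ℝ), ker γ x t = |x| ^ γ * Kc γ := by
  rcases eq_or_ne x 0 with rfl | hx
  · simp [ker, Real.zero_rpow hγ0.ne', abs_zero]
  · have hax : 0 < |x| := abs_pos.mpr hx
    have hpow : |x| ^ (1+γ) * |x| ^ (-1-γ) = 1 := by
      rw [← Real.rpow_add hax]; norm_num
    have step : ∀ t ∈ Ioi (0:ℝ), ker γ x t
        = |x| ^ (1+γ) * ((1 - Real.cos (|x| * t)) * (|x| * t) ^ (-1 - γ)) := by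
      intro t ht
      have ht0 : (0:ℝ) < t := ht
      have hcos : Real.cos (t * x) = Real.cos (|x| * t) := by
        rcases abs_cases x with ⟨h, _⟩ | ⟨h, _⟩
        · rw [h, mul_comm]
        · rw [h, show -x * t = -(t * x) by ring, Real.cos_neg]
      rw [ker, hcos, Real.mul_rpow hax.le ht0.le]
      linear_combination (Real.cos (|x| * t) * t ^ (-1-γ) - t ^ (-1-γ)) * hpow
    rw [setIntegral_congr_fun measurableSet_Ioi step, integral_const_mul,
      integral_comp_mul_left_Ioi (fun u => (1 - Real.cos u) * u ^ (-1-γ)) 0 hax,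
      mul_zero, smul_eq_mul, ← mul_assoc]
    have : (∫ u in Ioi (0:ℝ), (1 - Real.cos u) * u ^ (-1-γ)) = Kc γ := rfl
    rw [this]
    congr 1
    rw [← Real.rpow_neg_one |x|, ← Real.rpow_add hax]
    congr 1
    ring

lemma Kc_pos {γ : ℝ} (hγ0 : 0 < γ) (hγ2 : γ < 2) : 0 < Kc γ := by
  have hint : IntegrableOn (fun u : ℝ => (1 - Real.cos u) * u ^ (-1 - γ)) (Ioi 0) :=
    (ker_integrableOn hγ0 hγ2 1).congr_fun (fun u hu => by simp [ker]) measurableSet_Ioi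
  have hnn : 0 ≤ᵐ[volume.restrict (Ioi (0:ℝ))] fun u : ℝ => (1 - Real.cos u) * u ^ (-1 - γ) := by
    filter_upwards [ae_restrict_mem measurableSet_Ioi] with u hu
    exact mul_nonneg (one_sub_cos_nonneg _) (Real.rpow_nonneg (le_of_lt hu) _)
  rw [Kc, setIntegral_pos_iff_support_of_nonneg_ae hnn hint]
  have hsub : Ioo (Real.pi/2) Real.pi ⊆
      (Function.support fun u : ℝ => (1 - Real.cos u) * u ^ (-1 - γ)) ∩ Ioi 0 := by
    intro u hu
    have h1 : 0 < u := lt_trans (by positivity) hu.1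
    refine ⟨?_, h1⟩
    have hcos : Real.cos u ≤ 0 :=
      Real.cos_nonpos_of_pi_div_two_le_of_le hu.1.le (by linarith [hu.2, Real.pi_pos])
    have hp : 0 < (1 - Real.cos u) * u ^ (-1 - γ) :=
      mul_pos (by linarith) (Real.rpow_pos_of_pos h1 _)
    exact Function.mem_support.mpr hp.ne'
  refine lt_of_lt_of_le ?_ (measure_mono hsub)
  rw [Real.volume_Ioo]
  simp only [ENNReal.ofReal_pos]
  linarith [Real.pi_pos]

lemma ft_eq (f : ℝ → ℂ) (ω : ℝ) : ft f ω = 𝓕 f (ω / (2 * Real.pi)) := by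
  rw [Real.fourier_real_eq]
  unfold ft
  congr 1
  ext x
  rw [Circle.smul_def, Real.fourierChar_apply, smul_eq_mul]
  congr 1
  have hπ : (Real.pi : ℝ) ≠ 0 := Real.pi_ne_zero
  have : 2 * Real.pi * -(x * (ω / (2 * Real.pi))) = -(ω * x) := by field_simp
  rw [this]
  push_cast
  ring

lemma ft_continuous (f : ℝ → ℂ) (hf : Integrable f) : Continuous (ft f) := by
  have h : Continuous (𝓕 f) :=
    VectorFourier.fourierIntegral_continuous Real.continuous_fourierChar
      (by exact continuous_inner) hf
  have he : ft f = fun ω => 𝓕 f (ω / (2 * Real.pi)) := funext (ft_eq f)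
  rw [he]
  exact h.comp (continuous_id.div_const _)

lemma ft_comp_div (f : ℝ → ℂ) {a : ℝ} (ha : 0 < a) (ω : ℝ) :
    ft (fun x => f (x / a)) ω = (a : ℂ) * ft f (a * ω) := by
  unfold ft
  have key : (fun x : ℝ => Complex.exp (-(Complex.I * ω * x)) * f (x / a))
      = fun x : ℝ => (fun y : ℝ => Complex.exp (-(Complex.I * (a * ω) * y)) * f y) (x / a) := by
    ext x
    simp only []
    congr 2
    have hax : (a:ℂ) ≠ 0 := Complex.ofReal_ne_zero.mpr ha.ne'
    push_cast
    field_simp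
  rw [key, MeasureTheory.Measure.integral_comp_div
      (fun y : ℝ => Complex.exp (-(Complex.I * (a * ω) * y)) * f y) a,
    abs_of_pos ha, Complex.real_smul]
  push_cast
  ring_nf

lemma ft_all_zero (κ : SchwartzMap ℝ ℂ) (h : ∀ ω, ft (⇑κ) ω = 0) : κ = 0 := by
  have hπ : (2 * Real.pi) ≠ 0 := by positivity
  have h𝓕 : 𝓕 ⇑κ = 0 := by
    funext ξ
    have := ft_eq (⇑κ) (2 * Real.pi * ξ)
    rw [h, mul_div_cancel_left₀ ξ hπ] at this
    simpa using this.symm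
  have hinv := κ.continuous.fourierInv_fourier_eq κ.integrable
    (by rw [h𝓕]; exact integrable_zero _ _ _)
  rw [h𝓕] at hinv
  have hz : 𝓕⁻ (0 : ℝ → ℂ) = 0 := by
    funext w
    rw [Real.fourierInv_eq]
    simp
  rw [hz] at hinv
  exact DFunLike.coe_injective hinv.symm

lemma integral_coe (f : ℝ → ℝ) (μ : Measure ℝ) :
    ∫ x, ((f x : ℝ) : ℂ) ∂μ = ((∫ x, f x ∂μ : ℝ) : ℂ) := integral_ofReal

lemma ofReal_one_sub_cos (θ : ℝ) : ((1 - Real.cos θ : ℝ) : ℂ)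
    = 1 - (Complex.exp (Complex.I * θ) + Complex.exp (-(Complex.I * θ))) / 2 := by
  rw [show Complex.I * (θ:ℂ) = (θ:ℂ) * Complex.I by ring, Complex.exp_mul_I,
    show -((θ:ℂ) * Complex.I) = ((-θ : ℝ) : ℂ) * Complex.I by push_cast; ring,
    Complex.exp_mul_I]
  push_cast
  simp only [Complex.cos_neg, Complex.sin_neg, Complex.ofReal_cos]
  ring

end SigProof

open SigProof Set FourierTransform

theorem signature_of_cusp
    (γ : ℝ) (hγ0 : 0 < γ) (hγ2 : γ < 2)
    (κ : SchwartzMap ℝ ℂ) (hκ : IsSignatureWavelet κ) (a : ℝ) (ha : 0 < a) :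
    (wcoeff (fun x => ((|x| ^ γ : ℝ) : ℂ)) κ a 0).im = 0 ∧
    (wcoeff (fun x => ((|x| ^ γ : ℝ) : ℂ)) κ a 0).re < 0 ∧
    csgn (wcoeff (fun x => ((|x| ^ γ : ℝ) : ℂ)) κ a 0) = -1 := by
  obtain ⟨hκ0, ⟨c, d, hc, hcd, hsupp⟩, hreal⟩ := hκ
  set g : ℝ → ℂ := fun x => κ (x / a) with hg_def
  have hg_cont : Continuous g := κ.continuous.comp (continuous_id.div_const a)
  have hg_int : Integrable g := κ.integrable.comp_div ha.ne'
  have hftκ0 : ∀ s : ℝ, s ≤ 0 → ft (⇑κ) s = 0 := by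
    intro s hs
    by_contra hne
    have h1 : c ≤ s := (hsupp s hne).1
    linarith
  have hftκre : ∀ s : ℝ, ft (⇑κ) s = ((ft (⇑κ) s).re : ℂ) :=
    fun s => Complex.ext rfl (by simp [(hreal s).1])
  have hftg : ∀ ω : ℝ, ft g ω = (a:ℂ) * ft (⇑κ) (a * ω) := fun ω => ft_comp_div (⇑κ) ha ω
  have habs_bound : ∀ x : ℝ, |x| ^ γ ≤ 1 + x ^ 2 := by
    intro x
    rcases le_or_gt (|x|) 1 with h | h
    · have := Real.rpow_le_one (abs_nonneg x) h hγ0.le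
      nlinarith [sq_nonneg x]
    · have h1 : |x| ^ γ ≤ |x| ^ (2:ℝ) :=
        Real.rpow_le_rpow_of_exponent_le h.le hγ2.le
      rw [Real.rpow_two, sq_abs] at h1
      nlinarith
  have hdom : Integrable (fun x : ℝ => (1 + x ^ 2) * ‖g x‖) := by
    have h0 : Integrable (fun y : ℝ => ‖κ y‖) := κ.integrable.norm
    have h2 : Integrable (fun y : ℝ => ‖y‖ ^ 2 * ‖κ y‖) := κ.integrable_pow_mul volume 2
    have H : Integrable (fun y : ℝ => (1 + (a * y) ^ 2) * ‖κ y‖) := by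
      refine (h0.add (h2.const_mul (a^2))).congr ?_
      filter_upwards with y
      simp only [Pi.add_apply, Real.norm_eq_abs, sq_abs]
      ring
    refine (H.comp_div ha.ne').congr ?_
    filter_upwards with x
    rw [mul_div_cancel₀ x ha.ne']
  have hrpow_cont : Continuous fun x : ℝ => |x| ^ γ :=
    continuous_iff_continuousAt.mpr fun x =>
      (Real.continuousAt_rpow_const _ _ (Or.inr hγ0.le)).comp continuous_abs.continuousAt
  have hgr_cont : Continuous (fun x : ℝ => ((|x| ^ γ : ℝ) : ℂ) * g x) :=
    (Complex.continuous_ofReal.comp hrpow_cont).mul hg_cont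
  have hI_int : Integrable (fun x : ℝ => ((|x| ^ γ : ℝ) : ℂ) * g x) := by
    refine hdom.mono' hgr_cont.aestronglyMeasurable ?_
    filter_upwards with x
    rw [norm_mul, Complex.norm_real, Real.norm_eq_abs,
      abs_of_nonneg (Real.rpow_nonneg (abs_nonneg x) γ)]
    exact mul_le_mul_of_nonneg_right (habs_bound x) (norm_nonneg _)
  set I : ℂ := ∫ x : ℝ, ((|x| ^ γ : ℝ) : ℂ) * g x with hI_def
  set ν : Measure ℝ := volume.restrict (Ioi 0) with hν_def
  have hKcpos := Kc_pos hγ0 hγ2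
  -- Fubini
  have hΦmeas : AEStronglyMeasurable
      (Function.uncurry fun x t : ℝ => ((SigProof.ker γ x t : ℝ) : ℂ) * g x) (volume.prod ν) := by
    have hm : Measurable fun p : ℝ × ℝ => ((SigProof.ker γ p.1 p.2 : ℝ) : ℂ) * g p.1 := by
      apply Measurable.mul
      · exact Complex.measurable_ofReal.comp (by unfold SigProof.ker; fun_prop)
      · exact hg_cont.measurable.comp measurable_fst
    exact hm.aestronglyMeasurable
  have hΦint : Integrable
      (Function.uncurry fun x t : ℝ => ((SigProof.ker γ x t : ℝ) : ℂ) * g x) (volume.prod ν) := by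
    rw [MeasureTheory.integrable_prod_iff hΦmeas]
    constructor
    · filter_upwards with x
      exact ((ker_integrableOn hγ0 hγ2 x).ofReal.mul_const (g x))
    · have heq : ∀ x : ℝ, (∫ t, ‖((SigProof.ker γ x t : ℝ) : ℂ) * g x‖ ∂ν)
          = |x| ^ γ * Kc γ * ‖g x‖ := by
        intro x
        rw [hν_def]
        have hn : ∀ t ∈ Ioi (0:ℝ), ‖((SigProof.ker γ x t : ℝ) : ℂ) * g x‖ = ker γ x t * ‖g x‖ := by
          intro t ht
          rw [norm_mul, Complex.norm_real, Real.norm_eq_abs, abs_of_nonneg (SigProof.ker_nonneg γ x ht)]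
        rw [setIntegral_congr_fun measurableSet_Ioi hn, integral_mul_const,
          kernel_integral hγ0 hγ2 x]
      refine Integrable.congr ?_ (Filter.Eventually.of_forall fun x => (heq x).symm)
      refine (hdom.const_mul (Kc γ)).mono' ?_ ?_
      · exact ((hrpow_cont.mul continuous_const).mul hg_cont.norm).aestronglyMeasurable
      · filter_upwards with x
        rw [Real.norm_eq_abs, abs_of_nonneg (mul_nonneg
          (mul_nonneg (Real.rpow_nonneg (abs_nonneg x) γ) hKcpos.le) (norm_nonneg _))]
        have hre : |x| ^ γ * Kc γ * ‖g x‖ = Kc γ * (|x| ^ γ * ‖g x‖) := by ring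
        rw [hre]
        exact mul_le_mul_of_nonneg_left
          (mul_le_mul_of_nonneg_right (habs_bound x) (norm_nonneg _)) hKcpos.le
  have hstep1 : (Kc γ : ℂ) * I = ∫ x : ℝ, ∫ t : ℝ, ((SigProof.ker γ x t : ℝ) : ℂ) * g x ∂ν := by
    rw [hI_def, ← MeasureTheory.integral_const_mul]
    refine integral_congr_ae (Filter.Eventually.of_forall fun x => ?_)
    show (Kc γ : ℂ) * (((|x| ^ γ : ℝ) : ℂ) * g x)
      = ∫ t : ℝ, ((SigProof.ker γ x t : ℝ) : ℂ) * g x ∂ν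
    rw [MeasureTheory.integral_mul_const, hν_def,
      SigProof.integral_coe (SigProof.ker γ x) (volume.restrict (Ioi 0)),
      kernel_integral hγ0 hγ2 x]
    push_cast
    ring
  have hswap := MeasureTheory.integral_integral_swap
    (f := fun x t : ℝ => ((SigProof.ker γ x t : ℝ) : ℂ) * g x) hΦint
  -- inner integral
  have hinner : ∀ t ∈ Ioi (0:ℝ), (∫ x : ℝ, ((SigProof.ker γ x t : ℝ) : ℂ) * g x)
      = ((t ^ (-1-γ) : ℝ) : ℂ) * (-((a:ℂ)/2) * ft (⇑κ) (a * t)) := by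
    intro t ht
    have hpull : (∫ x : ℝ, ((SigProof.ker γ x t : ℝ) : ℂ) * g x)
        = ((t ^ (-1-γ) : ℝ) : ℂ) * ∫ x : ℝ, (((1 - Real.cos (t * x)) : ℝ) : ℂ) * g x := by
      rw [← MeasureTheory.integral_const_mul]
      refine integral_congr_ae (Filter.Eventually.of_forall fun x => ?_)
      simp only [SigProof.ker]
      push_cast
      ring
    rw [hpull]
    congr 1
    have hexpnorm : ∀ s : ℝ, ‖Complex.exp (Complex.I * (s:ℂ))‖ = 1 := by
      intro s
      rw [show Complex.I * (s:ℂ) = (s:ℂ) * Complex.I by ring]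
      exact Complex.norm_exp_ofReal_mul_I s
    have he1 : Integrable (fun x : ℝ => Complex.exp (Complex.I * t * x) * g x) := by
      refine hg_int.norm.mono' ?_ ?_
      · exact ((Complex.continuous_exp.comp
            (continuous_const.mul Complex.continuous_ofReal)).mul hg_cont).aestronglyMeasurable
      · filter_upwards with x
        rw [norm_mul, show Complex.I * (t:ℂ) * (x:ℂ) = Complex.I * ((t*x : ℝ):ℂ) by
          push_cast; ring, hexpnorm, one_mul]
    have he2 : Integrable (fun x : ℝ => Complex.exp (-(Complex.I * t * x)) * g x) := by
      refine hg_int.norm.mono' ?_ ?_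
      · exact ((Complex.continuous_exp.comp
            ((continuous_const.mul Complex.continuous_ofReal).neg)).mul
            hg_cont).aestronglyMeasurable
      · filter_upwards with x
        rw [norm_mul, show -(Complex.I * (t:ℂ) * (x:ℂ)) = Complex.I * ((-(t*x) : ℝ):ℂ) by
          push_cast; ring, hexpnorm, one_mul]
    have hsplit : (fun x : ℝ => (((1 - Real.cos (t * x)) : ℝ) : ℂ) * g x)
        = fun x : ℝ => g x - (1/2 : ℂ) * (Complex.exp (Complex.I * t * x) * g x
            + Complex.exp (-(Complex.I * t * x)) * g x) := by
      ext x
      rw [ofReal_one_sub_cos (t * x)]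
      push_cast
      ring
    have hsum : Integrable (fun x : ℝ => (1/2 : ℂ) * (Complex.exp (Complex.I * t * x) * g x
        + Complex.exp (-(Complex.I * t * x)) * g x)) := by
      have h := (he1.add he2).const_mul (1/2 : ℂ)
      simpa [Pi.add_apply] using h
    rw [hsplit, MeasureTheory.integral_sub hg_int hsum,
      MeasureTheory.integral_const_mul, MeasureTheory.integral_add he1 he2]
    have hv0 : (∫ x : ℝ, g x) = 0 := by
      have h1 : ft g 0 = ∫ x : ℝ, g x := by
        unfold ft
        refine integral_congr_ae (Filter.Eventually.of_forall fun x => ?_)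
        norm_num
      rw [← h1, hftg 0, mul_zero, hftκ0 0 le_rfl, mul_zero]
    have hv1 : (∫ x : ℝ, Complex.exp (-(Complex.I * t * x)) * g x) = ft g t := rfl
    have hv2 : (∫ x : ℝ, Complex.exp (Complex.I * t * x) * g x) = ft g (-t) := by
      unfold ft
      refine integral_congr_ae (Filter.Eventually.of_forall fun x => ?_)
      push_cast
      ring_nf
    have hftneg : ft g (-t) = 0 := by
      rw [hftg (-t), hftκ0 (a * (-t)) (by nlinarith [mem_Ioi.mp ht]), mul_zero]
    rw [hv0, hv1, hv2, hftneg, hftg t]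
    ring
  set M : ℝ := ∫ t in Ioi (0:ℝ), t ^ (-1-γ) * (ft (⇑κ) (a * t)).re with hM_def
  have hmain : (Kc γ : ℂ) * I = ((-(a/2) * M : ℝ) : ℂ) := by
    rw [hstep1, hswap, hν_def]
    rw [setIntegral_congr_fun measurableSet_Ioi hinner]
    have hpt : ∀ t ∈ Ioi (0:ℝ), ((t ^ (-1-γ) : ℝ) : ℂ) * (-((a:ℂ)/2) * ft (⇑κ) (a * t))
        = ((-(a/2) * (t ^ (-1-γ) * (ft (⇑κ) (a * t)).re) : ℝ) : ℂ) := by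
      intro t ht
      conv_lhs => rw [hftκre (a * t)]
      push_cast
      ring
    rw [setIntegral_congr_fun measurableSet_Ioi hpt,
      SigProof.integral_coe (fun t => -(a/2) * (t ^ (-1-γ) * (ft (⇑κ) (a * t)).re))
        (volume.restrict (Ioi 0)),
      MeasureTheory.integral_const_mul, hM_def]
  -- properties of M
  have hr_cont : Continuous fun s : ℝ => (ft (⇑κ) s).re :=
    Complex.continuous_re.comp (ft_continuous (⇑κ) κ.integrable)
  have hM_vanish : ∀ t : ℝ, t ∉ Icc (c/a) (d/a) → t ^ (-1-γ) * (ft (⇑κ) (a * t)).re = 0 := by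
    intro t htI
    have hz : ft (⇑κ) (a * t) = 0 := by
      by_contra hne
      have hmem := hsupp _ hne
      refine htI ⟨?_, ?_⟩
      · rw [div_le_iff₀ ha, mul_comm]
        exact hmem.1
      · rw [le_div_iff₀ ha, mul_comm]
        exact hmem.2
    rw [hz]
    simp
  have hM_int : IntegrableOn (fun t : ℝ => t ^ (-1-γ) * (ft (⇑κ) (a * t)).re) (Ioi 0) := by
    have hIcc : IntegrableOn (fun t : ℝ => t ^ (-1-γ) * (ft (⇑κ) (a * t)).re)
        (Icc (c/a) (d/a)) := by
      refine ContinuousOn.integrableOn_compact isCompact_Icc ?_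
      refine ContinuousOn.mul ?_
        ((hr_cont.comp (continuous_const.mul continuous_id)).continuousOn)
      intro t ht
      have ht0 : t ≠ 0 := (lt_of_lt_of_le (div_pos hc ha) ht.1).ne'
      exact (Real.continuousAt_rpow_const _ _ (Or.inl ht0)).continuousWithinAt
    exact (hIcc.integrable_of_forall_notMem_eq_zero hM_vanish).integrableOn
  have hexists : ∃ t0 : ℝ, 0 < t0 ∧ 0 < (ft (⇑κ) (a * t0)).re := by
    by_contra hcon
    push_neg at hcon
    apply hκ0
    apply ft_all_zero
    intro ω
    rcases le_or_gt ω 0 with h | h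
    · exact hftκ0 ω h
    · have ht0 : 0 < ω / a := div_pos h ha
      have h3 : a * (ω / a) = ω := by field_simp
      have h4 := hcon (ω / a) ht0
      rw [h3] at h4
      have hre0 : (ft (⇑κ) ω).re = 0 := le_antisymm h4 (hreal ω).2
      rw [hftκre ω, hre0]
      simp
  have hM_pos : 0 < M := by
    obtain ⟨t0, ht0, hrt0⟩ := hexists
    have hnn : 0 ≤ᵐ[volume.restrict (Ioi (0:ℝ))]
        fun t : ℝ => t ^ (-1-γ) * (ft (⇑κ) (a * t)).re := by
      filter_upwards [ae_restrict_mem measurableSet_Ioi] with t ht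
      exact mul_nonneg (Real.rpow_nonneg (le_of_lt ht) _) (hreal _).2
    rw [hM_def, setIntegral_pos_iff_support_of_nonneg_ae hnn hM_int]
    set U : Set ℝ := Ioi 0 ∩ (fun t : ℝ => (ft (⇑κ) (a * t)).re) ⁻¹' Ioi 0 with hU_def
    have hUopen : IsOpen U := isOpen_Ioi.inter
      (((hr_cont.comp (continuous_const.mul continuous_id)).isOpen_preimage _ isOpen_Ioi))
    have hUsub : U ⊆ (Function.support fun t : ℝ => t ^ (-1-γ) * (ft (⇑κ) (a * t)).re) ∩ Ioi 0 := by
      intro t ht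
      refine ⟨Function.mem_support.mpr ?_, ht.1⟩
      exact (mul_pos (Real.rpow_pos_of_pos ht.1 _) ht.2).ne'
    have ht0U : t0 ∈ U := ⟨ht0, hrt0⟩
    exact lt_of_lt_of_le (hUopen.measure_pos volume ⟨t0, ht0U⟩) (measure_mono hUsub)
  -- wrap up
  have hI_eq : I = ((-(a/2) * M / Kc γ : ℝ) : ℂ) := by
    have hKne : (Kc γ : ℂ) ≠ 0 := Complex.ofReal_ne_zero.mpr hKcpos.ne'
    have h2 : ((-(a/2) * M / Kc γ : ℝ) : ℂ) = ((-(a/2) * M : ℝ) : ℂ) / (Kc γ : ℂ) := by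
      push_cast; ring
    rw [h2, eq_div_iff hKne, mul_comm I ((Kc γ : ℂ)), hmain]
  set w : ℝ := (Real.sqrt a)⁻¹ * (-(a/2) * M / Kc γ) with hw_def
  have hw_neg : w < 0 := by
    have h1 : 0 < (Real.sqrt a)⁻¹ := inv_pos.mpr (Real.sqrt_pos.mpr ha)
    have h2 : -(a/2) * M / Kc γ < 0 := div_neg_of_neg_of_pos (by nlinarith) hKcpos
    exact mul_neg_of_pos_of_neg h1 h2
  have hwc : wcoeff (fun x => ((|x| ^ γ : ℝ) : ℂ)) κ a 0 = (w : ℂ) := by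
    rw [wcoeff]
    have hintg : (∫ x : ℝ, ((|x| ^ γ : ℝ) : ℂ) * κ ((x - 0) / a)) = I := by
      rw [hI_def]
      refine integral_congr_ae (Filter.Eventually.of_forall fun x => ?_)
      simp only [sub_zero]
      rfl
    rw [hintg, hI_eq, hw_def]
    push_cast
    ring
  have hwne : ((w : ℝ) : ℂ) ≠ 0 := Complex.ofReal_ne_zero.mpr hw_neg.ne
  refine ⟨?_, ?_, ?_⟩
  · rw [hwc]; exact Complex.ofReal_im w
  · rw [hwc, Complex.ofReal_re]; exact hw_neg
  · rw [hwc, csgn, if_neg hwne, Complex.norm_real, Real.norm_eq_abs, abs_of_neg hw_neg]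
    rw [Complex.ofReal_neg, div_neg, div_self hwne]
end
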